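/- For any unit vector |φ⟩ in ℂ²⊗H, ∑_{U∈{I,X,Y,Z}} |⟨φ|U|φ⟩|² ≤ 2, where the Pauli operators act on the first qubit. -/

import Mathlib

/-- Inner product ⟨φ|ψ⟩ (conjugate-linear in the first argument). -/
noncomputable def ip {α : Type*} [Fintype α] (φ ψ : α → ℂ) : ℂ :=
  ∑ x, (starRingEnd ℂ) (φ x) * ψ x

/-- Entries of the Pauli matrices: `pmat 0` = I, `pmat 1` = X, `pmat 2` = Y, `pmat 3` = Z. -/
def pmat (u : Fin 4) (a b : Fin 2) : ℂ :=
  if u = 0 then (if a = b then 1 else 0)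
  else if u = 1 then (if a = b then 0 else 1)
  else if u = 2 then
    (if a = 0 ∧ b = 1 then Complex.I else if a = 1 ∧ b = 0 then -Complex.I else 0)
  else (if a = b then (if a = 0 then 1 else -1) else 0)

/-- The Pauli operator `U ⊗ id` acting on the first qubit of ℂ²⊗H. -/
noncomputable def papply {H : Type*} (u : Fin 4) (ψ : Fin 2 × H → ℂ) : Fin 2 × H → ℂ :=
  fun p => ∑ a : Fin 2, pmat u p.1 a * ψ (a, p.2)


/-- For any unit vector |φ⟩ in ℂ²⊗H,
∑_{U∈{I,X,Y,Z}} |⟨φ|U|φ⟩|² ≤ 2, the Paulis acting on the first qubit. -/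
theorem sum_pauli_self_overlap_sq_le_two {m : ℕ} (φ : Fin 2 × Fin m → ℂ)
    (hφ : ip φ φ = 1) :
    ∑ u : Fin 4, Complex.normSq (ip φ (papply u φ)) ≤ 2 := by
  set c : ℂ := ∑ h, (starRingEnd ℂ) (φ (0,h)) * φ (1,h) with hc
  set A : ℝ := ∑ h, Complex.normSq (φ (0,h)) with hA
  set B : ℝ := ∑ h, Complex.normSq (φ (1,h)) with hB
  have h0 : ip φ (papply 0 φ) = 1 := by
    rw [← hφ]; congr 1; funext p
    simp [papply, pmat, Fin.sum_univ_two]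
  have h1 : ip φ (papply 1 φ) = c + (starRingEnd ℂ) c := by
    simp [ip, papply, pmat, Fintype.sum_prod_type_right, Fin.sum_univ_two,
      Finset.sum_add_distrib, hc, map_sum, mul_comm]
  have h2 : ip φ (papply 2 φ) = Complex.I * c - Complex.I * (starRingEnd ℂ) c := by
    simp [ip, papply, pmat, Fintype.sum_prod_type_right, Fin.sum_univ_two,
      hc, map_sum, Finset.mul_sum]
    rw [← Finset.sum_sub_distrib]
    exact Finset.sum_congr rfl fun x _ => by ring
  have h3 : ip φ (papply 3 φ) = (A : ℂ) - B := by
    simp [ip, papply, pmat, Fintype.sum_prod_type_right, Fin.sum_univ_two,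
      hA, hB, Complex.normSq_eq_conj_mul_self]
    rw [← Finset.sum_sub_distrib]
    exact Finset.sum_congr rfl fun x _ => by ring
  have hAB : A + B = 1 := by
    have : ((A + B : ℝ) : ℂ) = 1 := by
      rw [← hφ]
      simp [ip, Fintype.sum_prod_type_right, Fin.sum_univ_two, hA, hB,
        Complex.normSq_eq_conj_mul_self, Finset.sum_add_distrib]
    exact_mod_cast this
  have hAnn : 0 ≤ A := Finset.sum_nonneg fun i _ => Complex.normSq_nonneg _
  have hBnn : 0 ≤ B := Finset.sum_nonneg fun i _ => Complex.normSq_nonneg _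
  -- Cauchy-Schwarz
  have hcs1 : ‖c‖ ≤ ∑ h, ‖φ (0,h)‖ * ‖φ (1,h)‖ := by
    refine (norm_sum_le _ _).trans ?_
    refine Finset.sum_le_sum fun i _ => ?_
    rw [norm_mul, RCLike.norm_conj]
  have hcs2 : (∑ h, ‖φ (0,h)‖ * ‖φ (1,h)‖)^2 ≤ A * B := by
    have := Finset.sum_mul_sq_le_sq_mul_sq Finset.univ
      (fun h => ‖φ (0,h)‖) (fun h => ‖φ (1,h)‖)
    have eA : A = ∑ h, ‖φ (0,h)‖ ^ 2 := by
      simp [hA, Complex.sq_norm]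
    have eB : B = ∑ h, ‖φ (1,h)‖ ^ 2 := by
      simp [hB, Complex.sq_norm]
    rw [eA, eB]; exact this
  have hcauchy : Complex.normSq c ≤ A * B := by
    have hns : Complex.normSq c = ‖c‖^2 := by rw [Complex.normSq_eq_norm_sq]
    refine hns ▸ le_trans (pow_le_pow_left₀ (norm_nonneg _) hcs1 2) hcs2
  rw [Fin.sum_univ_four, h0, h1, h2, h3]
  have e1 : c + (starRingEnd ℂ) c = ((2 * c.re : ℝ) : ℂ) := by
    exact Complex.add_conj c
  have e2 : Complex.I * c - Complex.I * (starRingEnd ℂ) c = ((-(2 * c.im) : ℝ) : ℂ) := by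
    rw [← mul_sub, Complex.sub_conj]
    push_cast
    ring_nf
    rw [Complex.I_sq]
    ring
  have e3 : ((A : ℂ) - B) = ((A - B : ℝ) : ℂ) := by push_cast; ring
  rw [e1, e2, e3]
  simp only [Complex.normSq_ofReal, Complex.normSq_one]
  have hnsq : Complex.normSq c = c.re * c.re + c.im * c.im := rfl
  nlinarith [hcauchy, sq_nonneg (A - B), sq_nonneg c.re, sq_nonneg c.im]
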